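/- Let k > 3 and p ≥ 0. Then: (1) (R^{2p+1}·ω)(e_1, e_{k−1}, …, e_1, e_{k−1}, e_2, e_k) with 2p+1 leading pairs (e_1, e_{k−1}) equals −ε α (ω(e_1, e_k) − ω(e_2, e_{k−1})); (2) (R^{2p+2}·ω)(e_1, e_{k−1}, …, e_1, e_{k−1}, e_2, e_k) with 2p+2 leading pairs (e_1, e_{k−1}) equals −α (2α ω(e_1, e_{k−1}) + ω(e_2, e_{k−1}) + ω(e_1, e_k)). -/

import Mathlib

noncomputable section

/-- Gauss-equation curvature `R(X,Y)Z = h(Y,Z)·S(X) − h(X,Z)·S(Y)`. -/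
def RR {V : Type*} [AddCommGroup V] [Module ℝ V]
    (h : V →ₗ[ℝ] V →ₗ[ℝ] ℝ) (S : V →ₗ[ℝ] V) (X Y Z : V) : V :=
  h Y Z • S X - h X Z • S Y

/-- One application of the curvature action on an `m`-linear form (encoded as a
function on lists of vectors): `(R·T)(X,Y,Z₁,…,Zₘ) = −∑ᵢ T(Z₁,…,R(X,Y)Zᵢ,…,Zₘ)`;
the two newest (leftmost) arguments are consumed. -/
def RAct {V : Type*} [AddCommGroup V] [Module ℝ V]
    (h : V →ₗ[ℝ] V →ₗ[ℝ] ℝ) (S : V →ₗ[ℝ] V) (T : List V → ℝ) : List V → ℝ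
  | X :: Y :: Zs =>
      -∑ i ∈ Finset.range Zs.length, T (Zs.set i (RR h S X Y (Zs.getD i 0)))
  | _ => 0

/-- `R^p · ω`, as a function on lists of vectors (of length `2p+2`):
`R⁰·ω = ω` and `R^p·ω = R·(R^{p−1}·ω)`. -/
def Rpow {V : Type*} [AddCommGroup V] [Module ℝ V]
    (h : V →ₗ[ℝ] V →ₗ[ℝ] ℝ) (S : V →ₗ[ℝ] V) (ω : V →ₗ[ℝ] V →ₗ[ℝ] ℝ) (p : ℕ) :
    List V → ℝ :=
  (RAct h S)^[p] (fun l => ω (l.getD 0 0) (l.getD 1 0))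

/-- The list `X, Y, X, Y, …` with `p` pairs `(X, Y)`. -/
def pairList {V : Type*} (X Y : V) : ℕ → List V
  | 0 => []
  | p + 1 => X :: Y :: pairList X Y p

/-- The list `f 1, y, f 2, y, …, f p, y`. -/
def interleave {V : Type*} (f : ℕ → V) (y : V) : ℕ → List V
  | 0 => []
  | p + 1 => interleave f y p ++ [f (p + 1), y]

section Aux
variable {V : Type*} [AddCommGroup V] [Module ℝ V]
  (h : V →ₗ[ℝ] V →ₗ[ℝ] ℝ) (S : V →ₗ[ℝ] V) (ω : V →ₗ[ℝ] V →ₗ[ℝ] ℝ)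

lemma Rpow_succ (q : ℕ) : Rpow h S ω (q+1) = RAct h S (Rpow h S ω q) :=
  Function.iterate_succ_apply' _ _ _

lemma RAct_cons (T : List V → ℝ) (X Y : V) (Zs : List V) :
    RAct h S T (X :: Y :: Zs) =
      -∑ i ∈ Finset.range Zs.length, T (Zs.set i (RR h S X Y (Zs.getD i 0))) := rfl

lemma RR_lin (X Y : V) (a c : ℝ) (x y : V) :
    RR h S X Y (a • x + c • y) = a • RR h S X Y x + c • RR h S X Y y := by
  simp only [RR, map_add, map_smul, smul_eq_mul]
  module

lemma RR_zero_right (X Y : V) : RR h S X Y 0 = 0 := by simp [RR]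

lemma pairList_length (a b : V) (q : ℕ) : (pairList a b q).length = 2*q := by
  induction q with
  | zero => rfl
  | succ q ih => simp [pairList, ih]; omega

lemma getD_set_lt (l : List V) (i j : ℕ) (w : V) (hj : j < l.length) :
    (l.set i w).getD j 0 = if i = j then w else l.getD j 0 := by
  rw [List.getD_eq_getElem?_getD, List.getElem?_set]
  by_cases hij : i = j
  · subst hij; simp [hj]
  · simp [hij, List.getD_eq_getElem?_getD]

lemma pair_getD (a b : V) (l : List V) : ∀ q i, i < 2*q →
    (pairList a b q ++ l).getD i 0 = a ∨ (pairList a b q ++ l).getD i 0 = b := by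
  intro q
  induction q with
  | zero => omega
  | succ q ih =>
    intro i hi
    match i with
    | 0 => left; rfl
    | 1 => right; rfl
    | (j+2) =>
      have := ih j (by omega)
      simpa [pairList] using this

lemma pair_getD_right (a b : V) (l : List V) : ∀ q j,
    (pairList a b q ++ l).getD (2*q + j) 0 = l.getD j 0 := by
  intro q
  induction q with
  | zero => intro j; simp [pairList]
  | succ q ih =>
    intro j
    have h2 : 2*(q+1) + j = (2*q + j) + 1 + 1 := by omega
    rw [h2]
    simpa [pairList] using ih j

lemma pair_set_right (a b : V) (l : List V) (w : V) : ∀ q j,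
    (pairList a b q ++ l).set (2*q + j) w = pairList a b q ++ l.set j w := by
  intro q
  induction q with
  | zero => intro j; simp [pairList]
  | succ q ih =>
    intro j
    have h2 : 2*(q+1) + j = (2*q + j) + 1 + 1 := by omega
    rw [h2]
    simpa [pairList] using ih j

/-- vanishing lemma -/
lemma vanish (a b : V)
    (hkill : ∀ X Y Z : V, (X = a ∨ X = b ∨ X = 0) → (Y = a ∨ Y = b ∨ Y = 0) →
      (Z = a ∨ Z = b ∨ Z = 0) → RR h S X Y Z = 0) :
    ∀ q (L : List V), L.length = 2*q+2 →
    (∀ i, i < 2*q → (L.getD i 0 = a ∨ L.getD i 0 = b ∨ L.getD i 0 = 0)) →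
    ((∃ i, i < 2*q ∧ L.getD i 0 = 0) ∨ L.getD (2*q) 0 = 0 ∨ L.getD (2*q+1) 0 = 0) →
    Rpow h S ω q L = 0 := by
  intro q
  induction q with
  | zero =>
    intro L _ _ hz
    show ω (L.getD 0 0) (L.getD 1 0) = 0
    rcases hz with ⟨i, hi, _⟩ | hz | hz
    · omega
    · rw [show (2*0 : ℕ) = 0 from rfl] at hz; rw [hz]; simp
    · rw [show (2*0+1 : ℕ) = 1 from rfl] at hz; rw [hz]; simp
  | succ q ih =>
    intro L hlen hP hz
    rcases L with _ | ⟨X, _ | ⟨Y, Zs⟩⟩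
    · simp at hlen
    · simp at hlen
    · have hZlen : Zs.length = 2*q + 2 := by simp at hlen; omega
      have hPX : X = a ∨ X = b ∨ X = 0 := by
        have := hP 0 (by omega); simpa using this
      have hPY : Y = a ∨ Y = b ∨ Y = 0 := by
        have := hP 1 (by omega); simpa using this
      have hPZ : ∀ j, j < 2*q → (Zs.getD j 0 = a ∨ Zs.getD j 0 = b ∨ Zs.getD j 0 = 0) := by
        intro j hj
        have := hP (j+2) (by omega); simpa using this
      rw [Rpow_succ, RAct_cons, neg_eq_zero]
      apply Finset.sum_eq_zero
      intro i hi
      rw [Finset.mem_range, hZlen] at hi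
      set w := RR h S X Y (Zs.getD i 0) with hw
      -- key: if i < 2*q then w = 0; also if Zs.getD i 0 = 0 then w = 0
      have hwP : i < 2*q → w = 0 := fun hi2 => hkill _ _ _ hPX hPY (hPZ i hi2)
      have hw0 : Zs.getD i 0 = 0 → w = 0 := by
        intro h0; rw [hw, h0]; exact RR_zero_right h S X Y
      have hX0 : X = 0 → w = 0 := by intro h0; simp [hw, h0, RR]
      have hY0 : Y = 0 → w = 0 := by intro h0; simp [hw, h0, RR]
      apply ih (Zs.set i w)
      · simp [hZlen]
      · intro j hj
        rw [getD_set_lt _ _ _ _ (by omega)]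
        by_cases hij : i = j
        · simp only [hij, if_pos rfl]
          right; right; exact hwP (hij ▸ hj)
        · rw [if_neg hij]; exact hPZ j hj
      -- zero condition
      · have hset0 : ∀ j, j < 2*q+2 → (j = i → w = 0) → (j ≠ i → Zs.getD j 0 = 0) →
            (Zs.set i w).getD j 0 = 0 := by
          intro j hj he hne
          rw [getD_set_lt _ _ _ _ (by omega)]
          by_cases hij : i = j
          · rw [if_pos hij]; exact he hij.symm
          · rw [if_neg hij]; exact hne (fun hji => hij hji.symm)
        have useZ : ∀ j, j < 2*q+2 → Zs.getD j 0 = 0 →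
            ((∃ i', i' < 2*q ∧ (Zs.set i w).getD i' 0 = 0) ∨
              (Zs.set i w).getD (2*q) 0 = 0 ∨ (Zs.set i w).getD (2*q+1) 0 = 0) := by
          intro j hj hj0
          have hval : (Zs.set i w).getD j 0 = 0 := by
            apply hset0 j hj
            · intro hji; exact hw0 (hji ▸ hj0)
            · intro _; exact hj0
          rcases Nat.lt_or_ge j (2*q) with hlt | hge
          · exact Or.inl ⟨j, hlt, hval⟩
          · have : j = 2*q ∨ j = 2*q+1 := by omega
            rcases this with rfl | rfl
            · exact Or.inr (Or.inl hval)
            · exact Or.inr (Or.inr hval)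
        have useI : w = 0 →
            ((∃ i', i' < 2*q ∧ (Zs.set i w).getD i' 0 = 0) ∨
              (Zs.set i w).getD (2*q) 0 = 0 ∨ (Zs.set i w).getD (2*q+1) 0 = 0) := by
          intro hw'
          have hval : (Zs.set i w).getD i 0 = 0 := by
            rw [getD_set_lt _ _ _ _ (by omega), if_pos rfl]; exact hw'
          rcases Nat.lt_or_ge i (2*q) with hlt | hge
          · exact Or.inl ⟨i, hlt, hval⟩
          · have : i = 2*q ∨ i = 2*q+1 := by omega
            rcases this with h' | h'
            · exact Or.inr (Or.inl (h' ▸ hval))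
            · exact Or.inr (Or.inr (h' ▸ hval))
        rcases hz with ⟨j, hj, hj0⟩ | hz | hz
        · match j, hj with
          | 0, _ => exact useI (hX0 (by simpa using hj0))
          | 1, _ => exact useI (hY0 (by simpa using hj0))
          | (m+2), hj =>
            exact useZ m (by omega) (by simpa using hj0)
        · have : (2:ℕ)*(q+1) = (2*q)+1+1 := by omega
          rw [this] at hz
          exact useZ (2*q) (by omega) (by simpa using hz)
        · have : (2:ℕ)*(q+1)+1 = (2*q+1)+1+1 := by omega
          rw [this] at hz
          exact useZ (2*q+1) (by omega) (by simpa using hz)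


lemma rec_step (a b : V)
    (hkill : ∀ X Y Z : V, (X = a ∨ X = b ∨ X = 0) → (Y = a ∨ Y = b ∨ Y = 0) →
      (Z = a ∨ Z = b ∨ Z = 0) → RR h S X Y Z = 0) (q : ℕ) (u v : V) :
    Rpow h S ω (q+1) (pairList a b (q+1) ++ [u,v]) =
      -(Rpow h S ω q (pairList a b q ++ [RR h S a b u, v]) +
        Rpow h S ω q (pairList a b q ++ [u, RR h S a b v])) := by
  have hcons : pairList a b (q+1) ++ [u,v] = a :: b :: (pairList a b q ++ [u,v]) := rfl
  rw [hcons, Rpow_succ, RAct_cons]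
  set Zs := pairList a b q ++ [u, v] with hZs
  have hZlen : Zs.length = 2*q + 2 := by simp [hZs, pairList_length]
  rw [hZlen, Finset.sum_range_succ, Finset.sum_range_succ]
  have hu : Zs.getD (2*q) 0 = u := by simpa using pair_getD_right a b [u,v] q 0
  have hv : Zs.getD (2*q+1) 0 = v := by simpa using pair_getD_right a b [u,v] q 1
  have hsu : Zs.set (2*q) (RR h S a b u) = pairList a b q ++ [RR h S a b u, v] := by
    simpa using pair_set_right a b [u,v] (RR h S a b u) q 0
  have hsv : Zs.set (2*q+1) (RR h S a b v) = pairList a b q ++ [u, RR h S a b v] := by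
    simpa using pair_set_right a b [u,v] (RR h S a b v) q 1
  have hmain : ∑ i ∈ Finset.range (2*q),
      Rpow h S ω q (Zs.set i (RR h S a b (Zs.getD i 0))) = 0 := by
    apply Finset.sum_eq_zero
    intro i hi
    rw [Finset.mem_range] at hi
    have hw : RR h S a b (Zs.getD i 0) = 0 := by
      rcases pair_getD a b [u,v] q i hi with h' | h' <;>
        [exact hkill _ _ _ (Or.inl rfl) (Or.inr (Or.inl rfl)) (Or.inl h');
         exact hkill _ _ _ (Or.inl rfl) (Or.inr (Or.inl rfl)) (Or.inr (Or.inl h'))]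
    rw [hw]
    apply vanish h S ω a b hkill q
    · simp [hZlen]
    · intro j hj
      rw [getD_set_lt _ _ _ _ (by omega)]
      by_cases hij : i = j
      · rw [if_pos hij]; right; right; rfl
      · rw [if_neg hij]
        rcases pair_getD a b [u,v] q j hj with h' | h'
        · exact Or.inl h'
        · exact Or.inr (Or.inl h')
    · left; exact ⟨i, hi, by rw [getD_set_lt _ _ _ _ (by omega), if_pos rfl]⟩
  rw [hmain, hu, hv, hsu, hsv]
  ring

end Aux

def Gfun {V : Type*} [AddCommGroup V] [Module ℝ V]
    (h : V →ₗ[ℝ] V →ₗ[ℝ] ℝ) (S : V →ₗ[ℝ] V) (ω : V →ₗ[ℝ] V →ₗ[ℝ] ℝ)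
    (a b : V) (Q : ℕ) (u v : V) : ℝ :=
  Rpow h S ω Q (pairList a b Q ++ [u, v])

section Aux2
variable {V : Type*} [AddCommGroup V] [Module ℝ V]
  (h : V →ₗ[ℝ] V →ₗ[ℝ] ℝ) (S : V →ₗ[ℝ] V) (ω : V →ₗ[ℝ] V →ₗ[ℝ] ℝ)
  (a b : V)
  (hkill : ∀ X Y Z : V, (X = a ∨ X = b ∨ X = 0) → (Y = a ∨ Y = b ∨ Y = 0) →
      (Z = a ∨ Z = b ∨ Z = 0) → RR h S X Y Z = 0)

include hkill

omit hkill in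
lemma Gfun_zeroth (u v : V) : Gfun h S ω a b 0 u v = ω u v := rfl

lemma Gfun_rec (q : ℕ) (u v : V) :
    Gfun h S ω a b (q+1) u v =
      -(Gfun h S ω a b q (RR h S a b u) v + Gfun h S ω a b q u (RR h S a b v)) :=
  rec_step h S ω a b hkill q u v

lemma Gfun_zero1 (q : ℕ) (v : V) : Gfun h S ω a b q 0 v = 0 := by
  show Rpow h S ω q (pairList a b q ++ [0, v]) = 0
  apply vanish h S ω a b hkill q
  · simp [pairList_length]
  · intro i hi
    rcases pair_getD a b [0, v] q i hi with h' | h'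
    · exact Or.inl h'
    · exact Or.inr (Or.inl h')
  · right; left; simpa using pair_getD_right a b [(0:V), v] q 0

lemma Gfun_zero2 (q : ℕ) (u : V) : Gfun h S ω a b q u 0 = 0 := by
  show Rpow h S ω q (pairList a b q ++ [u, 0]) = 0
  apply vanish h S ω a b hkill q
  · simp [pairList_length]
  · intro i hi
    rcases pair_getD a b [u, 0] q i hi with h' | h'
    · exact Or.inl h'
    · exact Or.inr (Or.inl h')
  · right; right; simpa using pair_getD_right a b [u, (0:V)] q 1

lemma Gfun_lin1 : ∀ (q : ℕ) (c d : ℝ) (x y v : V),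
    Gfun h S ω a b q (c • x + d • y) v =
      c * Gfun h S ω a b q x v + d * Gfun h S ω a b q y v := by
  intro q
  induction q with
  | zero =>
    intro c d x y v
    simp only [Gfun_zeroth, map_add, map_smul, LinearMap.add_apply, LinearMap.smul_apply,
      smul_eq_mul]
  | succ q ih =>
    intro c d x y v
    rw [Gfun_rec h S ω a b hkill, RR_lin, ih, ih, Gfun_rec h S ω a b hkill,
      Gfun_rec h S ω a b hkill]
    ring

lemma Gfun_lin2 : ∀ (q : ℕ) (c d : ℝ) (u x y : V),
    Gfun h S ω a b q u (c • x + d • y) =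
      c * Gfun h S ω a b q u x + d * Gfun h S ω a b q u y := by
  intro q
  induction q with
  | zero =>
    intro c d u x y
    simp only [Gfun_zeroth, map_add, map_smul, smul_eq_mul]
  | succ q ih =>
    intro c d u x y
    rw [Gfun_rec h S ω a b hkill, RR_lin, ih, ih, Gfun_rec h S ω a b hkill,
      Gfun_rec h S ω a b hkill]
    ring

end Aux2

theorem stmt8
    {V : Type*} [AddCommGroup V] [Module ℝ V]
    (n : ℕ) (hn : 2 ≤ n) (e : ℕ → V)
    (hbasis : ∃ b : Module.Basis (Fin (2 * n)) ℝ V, ∀ i : Fin (2 * n), b i = e (i.1 + 1))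
    (h ω : V →ₗ[ℝ] V →ₗ[ℝ] ℝ)
    (hsymm : ∀ X Y, h X Y = h Y X)
    (halt : ∀ X, ω X X = 0)
    (S : V →ₗ[ℝ] V)
    (k : ℕ) (hk2 : 2 ≤ k) (hk : k ≤ 2 * n)
    (α ε : ℝ) (hε : ε = 1 ∨ ε = -1)
    (hS1 : ∀ i, 1 ≤ i → i ≤ k - 1 → S (e i) = α • e i + e (i + 1))
    (hS2 : S (e k) = α • e k)
    (hh1 : ∀ i j, 1 ≤ i → i ≤ k → 1 ≤ j → j ≤ k → i + j = k + 1 → h (e i) (e j) = ε)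
    (hh0 : ∀ i j, 1 ≤ i → i ≤ 2 * n → 1 ≤ j → j ≤ 2 * n → min i j ≤ k →
      ¬(i ≤ k ∧ j ≤ k ∧ i + j = k + 1) → h (e i) (e j) = 0)
    (hk3 : 3 < k)
    (p : ℕ) :
    Rpow h S ω (2 * p + 1) (pairList (e 1) (e (k - 1)) (2 * p + 1) ++ [e 2, e k]) =
      -(ε * α) * (ω (e 1) (e k) - ω (e 2) (e (k - 1))) ∧
    Rpow h S ω (2 * p + 2) (pairList (e 1) (e (k - 1)) (2 * p + 2) ++ [e 2, e k]) =
      -α * (2 * α * ω (e 1) (e (k - 1)) + ω (e 2) (e (k - 1)) + ω (e 1) (e k)) := by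
  -- basic h-values
  have h11 : h (e 1) (e 1) = 0 :=
    hh0 1 1 (by omega) (by omega) (by omega) (by omega) (by omega)
      (by rintro ⟨_, _, hs⟩; omega)
  have h1k1 : h (e 1) (e (k-1)) = 0 :=
    hh0 1 (k-1) (by omega) (by omega) (by omega) (by omega) (by omega)
      (by rintro ⟨_, _, hs⟩; omega)
  have hk11 : h (e (k-1)) (e 1) = 0 :=
    hh0 (k-1) 1 (by omega) (by omega) (by omega) (by omega) (by omega)
      (by rintro ⟨_, _, hs⟩; omega)
  have hk1k1 : h (e (k-1)) (e (k-1)) = 0 :=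
    hh0 (k-1) (k-1) (by omega) (by omega) (by omega) (by omega) (by omega)
      (by rintro ⟨_, _, hs⟩; omega)
  have hab : ∀ x y : V, (x = e 1 ∨ x = e (k-1) ∨ x = 0) → (y = e 1 ∨ y = e (k-1) ∨ y = 0) →
      h x y = 0 := by
    rintro x y (rfl | rfl | rfl) (rfl | rfl | rfl) <;>
      simp [h11, h1k1, hk11, hk1k1]
  have hkill : ∀ X Y Z : V, (X = e 1 ∨ X = e (k-1) ∨ X = 0) →
      (Y = e 1 ∨ Y = e (k-1) ∨ Y = 0) → (Z = e 1 ∨ Z = e (k-1) ∨ Z = 0) →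
      RR h S X Y Z = 0 := by
    intro X Y Z hX hY hZ
    show h Y Z • S X - h X Z • S Y = 0
    rw [hab Y Z hY hZ, hab X Z hX hZ]
    simp
  -- curvature values
  have hk12 : h (e (k-1)) (e 2) = ε := hh1 (k-1) 2 (by omega) (by omega) (by omega) (by omega) (by omega)
  have h12 : h (e 1) (e 2) = 0 :=
    hh0 1 2 (by omega) (by omega) (by omega) (by omega) (by omega)
      (by rintro ⟨_, _, hs⟩; omega)
  have h1k : h (e 1) (e k) = ε := hh1 1 k (by omega) (by omega) (by omega) (by omega) (by omega)
  have hk1k : h (e (k-1)) (e k) = 0 :=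
    hh0 (k-1) k (by omega) (by omega) (by omega) (by omega) (by omega)
      (by rintro ⟨_, _, hs⟩; omega)
  have hSe1 : S (e 1) = α • e 1 + e 2 := by
    simpa using hS1 1 (by omega) (by omega)
  have hSek1 : S (e (k-1)) = α • e (k-1) + e k := by
    have := hS1 (k-1) (by omega) (by omega)
    rwa [show k-1+1 = k from by omega] at this
  have hRe1 : RR h S (e 1) (e (k-1)) (e 1) = 0 :=
    hkill _ _ _ (Or.inl rfl) (Or.inr (Or.inl rfl)) (Or.inl rfl)
  have hRek1 : RR h S (e 1) (e (k-1)) (e (k-1)) = 0 :=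
    hkill _ _ _ (Or.inl rfl) (Or.inr (Or.inl rfl)) (Or.inr (Or.inl rfl))
  have hRe2 : RR h S (e 1) (e (k-1)) (e 2) = (ε*α) • e 1 + ε • e 2 := by
    show h (e (k-1)) (e 2) • S (e 1) - h (e 1) (e 2) • S (e (k-1)) = _
    rw [hk12, h12, hSe1]
    module
  have hRek : RR h S (e 1) (e (k-1)) (e k) = (-(ε*α)) • e (k-1) + (-ε) • e k := by
    show h (e (k-1)) (e k) • S (e 1) - h (e 1) (e k) • S (e (k-1)) = _
    rw [hk1k, h1k, hSek1]
    module
  have hε2 : ε * ε = 1 := by rcases hε with rfl | rfl <;> norm_num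
  -- G facts
  have hrec := Gfun_rec h S ω (e 1) (e (k-1)) hkill
  have hz1 := Gfun_zero1 h S ω (e 1) (e (k-1)) hkill
  have hz2 := Gfun_zero2 h S ω (e 1) (e (k-1)) hkill
  have hlin1 := Gfun_lin1 h S ω (e 1) (e (k-1)) hkill
  have hlin2 := Gfun_lin2 h S ω (e 1) (e (k-1)) hkill
  have h0th := Gfun_zeroth h S ω (e 1) (e (k-1))
  have e1ek1 : ∀ Q, Gfun h S ω (e 1) (e (k-1)) (Q+1) (e 1) (e (k-1)) = 0 := by
    intro Q
    rw [hrec, hRe1, hRek1, hz1, hz2]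
    ring
  have step_b : ∀ Q, Gfun h S ω (e 1) (e (k-1)) (Q+2) (e 1) (e k) =
      ε * Gfun h S ω (e 1) (e (k-1)) (Q+1) (e 1) (e k) := by
    intro Q
    rw [show Q+2 = (Q+1)+1 from rfl, hrec, hRe1, hRek, hz1, hlin2, e1ek1 Q]
    ring
  have step_c : ∀ Q, Gfun h S ω (e 1) (e (k-1)) (Q+2) (e 2) (e (k-1)) =
      -(ε * Gfun h S ω (e 1) (e (k-1)) (Q+1) (e 2) (e (k-1))) := by
    intro Q
    rw [show Q+2 = (Q+1)+1 from rfl, hrec, hRe2, hRek1, hz2, hlin1, e1ek1 Q]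
    ring
  have base_b : Gfun h S ω (e 1) (e (k-1)) 1 (e 1) (e k) =
      ε * (α * ω (e 1) (e (k-1)) + ω (e 1) (e k)) := by
    rw [show (1:ℕ) = 0+1 from rfl, hrec, hRe1, hRek, hz1, hlin2, h0th, h0th]
    ring
  have base_c : Gfun h S ω (e 1) (e (k-1)) 1 (e 2) (e (k-1)) =
      -(ε * (α * ω (e 1) (e (k-1)) + ω (e 2) (e (k-1)))) := by
    rw [show (1:ℕ) = 0+1 from rfl, hrec, hRe2, hRek1, hz2, hlin1, h0th, h0th]
    ring
  have hodd : ∀ q, Gfun h S ω (e 1) (e (k-1)) (2*q+1) (e 1) (e k) =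
      ε * (α * ω (e 1) (e (k-1)) + ω (e 1) (e k)) ∧
      Gfun h S ω (e 1) (e (k-1)) (2*q+1) (e 2) (e (k-1)) =
      -(ε * (α * ω (e 1) (e (k-1)) + ω (e 2) (e (k-1)))) := by
    intro q
    induction q with
    | zero => exact ⟨base_b, base_c⟩
    | succ q ih =>
      constructor
      · rw [show 2*(q+1)+1 = (2*q+1)+2 from by ring, step_b, show (2*q+1)+1 = (2*q)+2 from by ring,
          step_b, ih.1]
        linear_combination (ε * (α * ω (e 1) (e (k-1)) + ω (e 1) (e k))) * hε2
      · rw [show 2*(q+1)+1 = (2*q+1)+2 from by ring, step_c, show (2*q+1)+1 = (2*q)+2 from by ring,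
          step_c, ih.2]
        linear_combination (-(ε * (α * ω (e 1) (e (k-1)) + ω (e 2) (e (k-1))))) * hε2
  have hd : ∀ Q, Gfun h S ω (e 1) (e (k-1)) (Q+1) (e 2) (e k) =
      -(ε*α) * (Gfun h S ω (e 1) (e (k-1)) Q (e 1) (e k) -
        Gfun h S ω (e 1) (e (k-1)) Q (e 2) (e (k-1))) := by
    intro Q
    rw [hrec, hRe2, hRek, hlin1, hlin2]
    ring
  constructor
  · show Gfun h S ω (e 1) (e (k-1)) (2*p+1) (e 2) (e k) = _
    rw [hd (2*p)]
    rcases p with _ | q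
    · rw [show 2*0 = 0 from rfl, h0th, h0th]
    · rw [show 2*(q+1) = (2*q)+2 from by ring, step_b, step_c, (hodd q).1, (hodd q).2]
      linear_combination (-(ε*α) * (ω (e 1) (e k) - ω (e 2) (e (k-1)))) * hε2
  · show Gfun h S ω (e 1) (e (k-1)) (2*p+2) (e 2) (e k) = _
    rw [show 2*p+2 = (2*p+1)+1 from rfl, hd (2*p+1), (hodd p).1, (hodd p).2]
    linear_combination (-α * (2*α*ω (e 1) (e (k-1)) + ω (e 2) (e (k-1)) + ω (e 1) (e k))) * hε2
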